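/- Let p₀, …, p_k ∈ ℝⁿ be unit vectors (k ≥ 1), let λ₀, …, λ_k ∈ (0,1) with Σᵢλᵢ = 1, set p := Σᵢλᵢpᵢ, and assume that the vectors p₀−p, …, p_k−p are not all zero. Let F := span{p₀−p, …, p_k−p}, let Q := conv{p−p₀, …, p−p_k}, and let K be the distance from the origin to the relative boundary of Q within F. Then K > 0 and, for every unit vector ζ of the form ζ = z/|z| with z ∈ conv{p₀−p, …, p_k−p}, z ≠ 0, one has min_{i=0,…,k} ⟨pᵢ−p, x⟩ ≤ −K·|⟨ζ, x⟩| for all x ∈ ℝⁿ. -/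

import Mathlib

open scoped InnerProductSpace
open Metric Set Filter

noncomputable section

abbrev En (n : ℕ) := EuclideanSpace ℝ (Fin n)

variable {n : ℕ}

/-- Distance from the boundary of `Ω`. -/
noncomputable def dBd (Ω : Set (En n)) (x : En n) : ℝ := Metric.infDist x (frontier Ω)

/-- The inradius `ρ_Ω := max_{closure Ω} d_∂Ω`. -/
noncomputable def rhoΩ (Ω : Set (En n)) : ℝ := sSup (dBd Ω '' closure Ω)

/-- The singular set `Σ(Ω)`: points of `Ω` where `d_∂Ω` is not differentiable. -/
def SingSet (Ω : Set (En n)) : Set (En n) := {x ∈ Ω | ¬ DifferentiableAt ℝ (dBd Ω) x}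

/-- The cut locus: the closure of the singular set. -/
def cutLocus (Ω : Set (En n)) : Set (En n) := closure (SingSet Ω)

/-- The high ridge: points of `closure Ω` where `d_∂Ω` attains its maximum `ρ_Ω`. -/
def highRidge (Ω : Set (En n)) : Set (En n) := {x ∈ closure Ω | dBd Ω x = rhoΩ Ω}

noncomputable def c₀ : ℝ := 3 ^ ((4 : ℝ) / 3) / 4

/-- The candidate web solution `φ_Ω`. -/
noncomputable def phiΩ (Ω : Set (En n)) (x : En n) : ℝ :=
  c₀ * (rhoΩ Ω ^ ((4 : ℝ) / 3) - (rhoΩ Ω - dBd Ω x) ^ ((4 : ℝ) / 3))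

/-- The infinity Laplacian `⟨D²φ(x)∇φ(x), ∇φ(x)⟩` of a smooth function. -/
noncomputable def infLap (φ : En n → ℝ) (x : En n) : ℝ :=
  ⟪(fderiv ℝ (gradient φ) x) (gradient φ x), gradient φ x⟫_ℝ

/-- Viscosity subsolution of `-Δ_∞ u = 1` on an open set `A`. -/
def IsViscSubsol (A : Set (En n)) (u : En n → ℝ) : Prop :=
  ∀ φ : En n → ℝ, ContDiffOn ℝ 2 φ A → ∀ x₀ ∈ A,
    IsLocalMin (φ - u) x₀ → -infLap φ x₀ ≤ 1

/-- Viscosity supersolution of `-Δ_∞ u = 1` on an open set `A`. -/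
def IsViscSupersol (A : Set (En n)) (u : En n → ℝ) : Prop :=
  ∀ φ : En n → ℝ, ContDiffOn ℝ 2 φ A → ∀ x₀ ∈ A,
    IsLocalMax (φ - u) x₀ → 1 ≤ -infLap φ x₀

/-- Viscosity solution of `-Δ_∞ u = 1` on an open set `A`. -/
def IsViscSol (A : Set (En n)) (u : En n → ℝ) : Prop :=
  ContinuousOn u A ∧ IsViscSubsol A u ∧ IsViscSupersol A u

/-- Viscosity solution of the Dirichlet problem `-Δ_∞ u = 1` in `Ω`, `u = 0` on `∂Ω`. -/
def IsDirichletSol (Ω : Set (En n)) (u : En n → ℝ) : Prop :=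
  ContinuousOn u (closure Ω) ∧ (∀ x ∈ frontier Ω, u x = 0) ∧ IsViscSol Ω u

/-- `u` is a web function on `Ω`: it depends only on the distance from the boundary. -/
def IsWebOn (Ω : Set (En n)) (u : En n → ℝ) : Prop :=
  ∃ f : ℝ → ℝ, ContinuousOn f (Set.Icc 0 (rhoΩ Ω)) ∧ ∀ x ∈ closure Ω, u x = f (dBd Ω x)

/-- Fréchet superdifferential of `u` at `x`. -/
def superDiff (u : En n → ℝ) (x : En n) : Set (En n) :=
  {p | ∀ ε > 0, ∀ᶠ y in nhds x, u y - u x - ⟪p, y - x⟫_ℝ ≤ ε * ‖y - x‖}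

/-- Set of reachable gradients `D*u(x)`. -/
def reachGrad (u : En n → ℝ) (x : En n) : Set (En n) :=
  {p | ∃ xs : ℕ → En n, (∀ h, xs h ≠ x) ∧ (∀ h, DifferentiableAt ℝ u (xs h)) ∧
    Filter.Tendsto xs Filter.atTop (nhds x) ∧
    Filter.Tendsto (fun h => gradient u (xs h)) Filter.atTop (nhds p)}

/-- The set of projections of `x` onto a closed set `S`. -/
def projSet (S : Set (En n)) (x : En n) : Set (En n) :=
  {y ∈ S | dist x y = Metric.infDist x S}

end
set_option maxHeartbeats 2000000 in
/-- Geometric lemma (Step 2 of the distance estimate): lower bound for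
the minimum of `⟨pᵢ - p, x⟩` in terms of the distance `K` from the origin to the
relative boundary of `Q = conv{p - p₀, …, p - p_k}` within `F = span{p₀ - p, …, p_k - p}`. -/
theorem min_inner_estimate {n k : ℕ} (hk : 1 ≤ k) (p : Fin (k + 1) → En n)
    (hunit : ∀ i, ‖p i‖ = 1) (lam : Fin (k + 1) → ℝ)
    (hlam : ∀ i, lam i ∈ Set.Ioo (0 : ℝ) 1) (hsum : ∑ i, lam i = 1)
    (pbar : En n) (hpbar : pbar = ∑ i, lam i • p i)
    (hnz : ∃ i, p i - pbar ≠ 0)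
    (F : Submodule ℝ (En n)) (hF : F = Submodule.span ℝ (Set.range fun i => p i - pbar))
    (Q : Set (En n)) (hQ : Q = convexHull ℝ (Set.range fun i => pbar - p i))
    (K : ℝ)
    (hK : K = Metric.infDist (0 : En n)
      (Subtype.val '' frontier ((Subtype.val : F → En n) ⁻¹' Q))) :
    0 < K ∧
      ∀ ζ : En n,
        (∃ z ∈ convexHull ℝ (Set.range fun i => p i - pbar), z ≠ 0 ∧ ζ = ‖z‖⁻¹ • z) →
        ∀ x : En n,
          Finset.univ.inf' Finset.univ_nonempty (fun i => ⟪p i - pbar, x⟫_ℝ)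
            ≤ -K * |⟪ζ, x⟫_ℝ| := by
    classical
  set q : Fin (k + 1) → En n := fun i => pbar - p i with hq
  have hqF : ∀ i, q i ∈ F := by
    intro i
    have h1 : p i - pbar ∈ F := by
      rw [hF]; exact Submodule.subset_span ⟨i, rfl⟩
    have h2 := F.neg_mem h1
    simpa [hq, neg_sub] using h2
  have hQF : Q ⊆ (F : Set (En n)) := by
    rw [hQ]
    refine convexHull_min ?_ F.convex
    rintro y ⟨i, rfl⟩; exact hqF i
  have hQcomp : IsCompact Q := by
    rw [hQ]; exact (Set.finite_range _).isCompact_convexHull ℝ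
  have hQclosed : IsClosed Q := hQcomp.isClosed
  set Q' : Set F := (Subtype.val : F → En n) ⁻¹' Q with hQ'
  have hQ'closed : IsClosed Q' := hQclosed.preimage continuous_subtype_val
  have hsum0 : ∑ i, lam i • q i = 0 := by
    simp only [hq, smul_sub]
    rw [Finset.sum_sub_distrib, ← Finset.sum_smul, hsum, one_smul, hpbar, sub_self]
  have h0Q : (0 : En n) ∈ Q := by
    rw [hQ]
    have hmem := Finset.centerMass_mem_convexHull (Finset.univ : Finset (Fin (k + 1)))
      (w := lam) (fun i _ => (hlam i).1.le) (by rw [hsum]; norm_num)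
      (z := q) (fun i _ => Set.mem_range_self i)
    rwa [Finset.centerMass_eq_of_sum_1 _ q hsum, hsum0] at hmem
  have h0Q' : (0 : F) ∈ Q' := by
    simp only [hQ', Set.mem_preimage, Submodule.coe_zero]
    exact h0Q
  -- scaled sums with subprobability weights lie in Q
  have hscale : ∀ w : Fin (k + 1) → ℝ, (∀ i, 0 ≤ w i) → (∑ i, w i) ≤ 1 →
      (∑ i, w i • q i) ∈ Q := by
    intro w hw0 hw1
    rcases eq_or_lt_of_le (Finset.sum_nonneg fun i _ => hw0 i) with hs | hs
    · have hz : ∀ i ∈ Finset.univ, w i = 0 :=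
        (Finset.sum_eq_zero_iff_of_nonneg fun i _ => hw0 i).1 hs.symm
      have hzero : (∑ i, w i • q i) = 0 :=
        Finset.sum_eq_zero fun i hi => by rw [hz i hi, zero_smul]
      rw [hzero]; exact h0Q
    · have hc : Finset.univ.centerMass w q ∈ Q := by
        rw [hQ]
        exact Finset.centerMass_mem_convexHull _ (fun i _ => hw0 i) hs
          (fun i _ => Set.mem_range_self i)
      have heq : (∑ i, w i • q i) = (∑ i, w i) • Finset.univ.centerMass w q := by
        rw [Finset.centerMass, smul_smul, mul_inv_cancel₀ hs.ne', one_smul]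
      rw [heq]
      have hconv : Convex ℝ Q := by rw [hQ]; exact convex_convexHull ℝ _
      have hcomb := hconv hc h0Q hs.le (by linarith : (0:ℝ) ≤ 1 - ∑ i, w i) (by ring)
      simpa using hcomb
  -- work inside F
  set e : Fin (k + 1) → F := fun i => ⟨q i, hqF i⟩ with he
  have hspanq : Submodule.span ℝ (Set.range q) = F := by
    have hneg : (Set.range fun i => p i - pbar) = -Set.range q := by
      ext y
      simp only [Set.mem_neg, Set.mem_range, hq]
      constructor
      · rintro ⟨i, rfl⟩; exact ⟨i, by rw [neg_sub]⟩
      · rintro ⟨i, hi⟩; exact ⟨i, by rw [← neg_neg y, ← hi, neg_sub]⟩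
    rw [hF, hneg, Submodule.span_neg]
  have hspan_top : Submodule.span ℝ (Set.range e) = (⊤ : Submodule ℝ F) := by
    apply Submodule.map_injective_of_injective F.injective_subtype
    rw [Submodule.map_span, Submodule.map_top, Submodule.range_subtype]
    have himg : F.subtype '' Set.range e = Set.range q := by
      rw [← Set.range_comp]; rfl
    rw [himg, hspanq]
  set Llin : (Fin (k + 1) → ℝ) →ₗ[ℝ] F := Fintype.linearCombination ℝ e with hLlin
  have hLsurj : Function.Surjective Llin := by
    rw [← LinearMap.range_eq_top, hLlin, Fintype.range_linearCombination, hspan_top]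
  set L : (Fin (k + 1) → ℝ) →L[ℝ] F := LinearMap.toContinuousLinearMap Llin with hL
  have hLcoe : ⇑L = ⇑Llin := by rw [hL, LinearMap.coe_toContinuousLinearMap']
  have hLopen : IsOpenMap L := ContinuousLinearMap.isOpenMap L (by rw [hLcoe]; exact hLsurj)
  set U : Set (Fin (k + 1) → ℝ) :=
    {w | ∀ i, 0 < w i} ∩ {w | ∑ i, w i < 1} with hU
  have hUopen : IsOpen U := by
    apply IsOpen.inter
    · have hrw : {w : Fin (k + 1) → ℝ | ∀ i, 0 < w i} = ⋂ i, {w | 0 < w i} := by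
        ext w; simp
      rw [hrw]
      exact isOpen_iInter_of_finite fun i =>
        isOpen_lt continuous_const (continuous_apply i)
    · exact isOpen_lt (continuous_finset_sum _ fun i _ => continuous_apply i) continuous_const
  have hLval : ∀ w : Fin (k + 1) → ℝ, ((L w : F) : En n) = ∑ i, w i • q i := by
    intro w
    have h1 : (L w : F) = ∑ i, w i • e i := by
      rw [hLcoe, hLlin]; rfl
    rw [h1]
    have h2 := map_sum F.subtype (fun i => w i • e i) Finset.univ
    simp only [he] at h2 ⊢
    exact h2.trans (by rfl)
  have hLU : L '' U ⊆ Q' := by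
    rintro _ ⟨w, ⟨hw1, hw2⟩, rfl⟩
    simp only [hQ', Set.mem_preimage]
    rw [hLval w]
    exact hscale w (fun i => (hw1 i).le) hw2.le
  have hw0U : (fun i => lam i / 2) ∈ U := by
    constructor
    · intro i; exact div_pos (hlam i).1 (by norm_num)
    · show (∑ i, lam i / 2) < 1
      rw [← Finset.sum_div, hsum]; norm_num
  have hLw0 : L (fun i => lam i / 2) = 0 := by
    apply Subtype.ext
    rw [hLval]
    simp only [Submodule.coe_zero]
    have h3 : (∑ i, (lam i / 2) • q i) = (2⁻¹ : ℝ) • ∑ i, lam i • q i := by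
      rw [Finset.smul_sum]
      refine Finset.sum_congr rfl fun i _ => ?_
      rw [smul_smul, div_eq_inv_mul]
    rw [h3, hsum0, smul_zero]
  have h0int : (0 : F) ∈ interior Q' :=
    mem_interior.2 ⟨L '' U, hLU, hLopen U hUopen,
      ⟨fun i => lam i / 2, hw0U, hLw0⟩⟩
  obtain ⟨ε, hε, hballint⟩ := Metric.mem_nhds_iff.1 (isOpen_interior.mem_nhds h0int)
  -- the frontier is nonempty
  obtain ⟨C, hC⟩ := isBounded_iff_forall_norm_le.1 hQcomp.isBounded
  obtain ⟨i₀, hi₀⟩ := hnz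
  have hd : (0:ℝ) < ‖p i₀ - pbar‖ := norm_pos_iff.2 hi₀
  have hvF : ((|C| + 1) / ‖p i₀ - pbar‖) • (p i₀ - pbar) ∈ F :=
    F.smul_mem _ (by rw [hF]; exact Submodule.subset_span ⟨i₀, rfl⟩)
  have hvnorm : ‖((|C| + 1) / ‖p i₀ - pbar‖) • (p i₀ - pbar)‖ = |C| + 1 := by
    rw [norm_smul, Real.norm_eq_abs,
      abs_of_nonneg (div_nonneg (by positivity) hd.le), div_mul_cancel₀ _ hd.ne']
  have hvQ : ((|C| + 1) / ‖p i₀ - pbar‖) • (p i₀ - pbar) ∉ Q := by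
    intro h
    have h4 := hC _ h
    rw [hvnorm] at h4
    have h4b := le_abs_self C
    linarith
  have hQ'neuniv : Q' ≠ Set.univ := by
    intro h
    have h5 : (⟨_, hvF⟩ : F) ∈ Q' := h ▸ Set.mem_univ _
    exact hvQ h5
  have hfront : (frontier Q').Nonempty := nonempty_frontier_iff.2 ⟨⟨0, h0Q'⟩, hQ'neuniv⟩
  have hKF : K = Metric.infDist (0 : F) (frontier Q') := by
    rw [hK]
    have h6 := Metric.infDist_image (t := frontier Q') (x := (0 : F))
      (isometry_subtype_coe (s := (F : Set (En n))))
    simp at h6; exact h6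
  have hKε : ε ≤ K := by
    rw [hKF]
    by_contra h
    push_neg at h
    obtain ⟨y, hyB, hy⟩ := (Metric.infDist_lt_iff hfront).1 h
    have h7 : y ∈ interior Q' := hballint (by
      simpa [Metric.mem_ball, dist_comm] using hy)
    exact hyB.2 h7
  have hK0 : 0 < K := lt_of_lt_of_le hε hKε
  -- the closed ball of radius K in F is contained in Q'
  have hmem_lt : ∀ y : F, ‖y‖ < K → y ∈ Q' := by
    intro y hy
    by_contra hyQ
    have hseg : IsPreconnected (segment ℝ (0:F) y) := (convex_segment _ _).isPreconnected
    have hdisj : ∀ w ∈ segment ℝ (0:F) y, w ∉ frontier Q' := by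
      intro w hw hwf
      have h8 : K ≤ dist (0:F) w := by
        rw [hKF]; exact Metric.infDist_le_dist_of_mem hwf
      have h9 : ‖w‖ < K := by
        rw [segment_eq_image] at hw
        obtain ⟨θ, hθ, rfl⟩ := hw
        have h10 : ‖(1-θ) • (0:F) + θ • y‖ = θ * ‖y‖ := by
          rw [smul_zero, zero_add, norm_smul, Real.norm_eq_abs, abs_of_nonneg hθ.1]
        rw [h10]
        calc θ * ‖y‖ ≤ 1 * ‖y‖ := by nlinarith [norm_nonneg y, hθ.2]
          _ = ‖y‖ := one_mul _
          _ < K := hy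
      rw [dist_zero_left] at h8
      linarith
    have hsub : segment ℝ (0:F) y ⊆ interior Q' ∪ (closure Q')ᶜ := by
      intro w hw
      by_cases hwc : w ∈ closure Q'
      · rcases (closure_eq_interior_union_frontier Q' ▸ hwc) with h | h
        · exact Or.inl h
        · exact absurd h (hdisj w hw)
      · exact Or.inr hwc
    have hall : segment ℝ (0:F) y ⊆ interior Q' :=
      hseg.subset_left_of_subset_union isOpen_interior isClosed_closure.isOpen_compl
        (disjoint_compl_right.mono_left interior_subset_closure) hsub
        ⟨0, left_mem_segment ℝ (0:F) y, h0int⟩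
    exact hyQ (interior_subset (hall (right_mem_segment ℝ (0:F) y)))
  have hmem_le : ∀ y : F, ‖y‖ ≤ K → y ∈ Q' := by
    intro y hy
    rcases eq_or_ne y 0 with rfl | hy0
    · exact h0Q'
    have hyn : 0 < ‖y‖ := norm_pos_iff.2 hy0
    have hseq : ∀ m : ℕ, ((1 - 1/(m+1) : ℝ) • y) ∈ Q' := by
      intro m
      apply hmem_lt
      have h11 : (0:ℝ) < 1/(m+1) := by positivity
      have h12 : (1:ℝ)/(m+1) ≤ 1 := by
        rw [div_le_one (by positivity)]
        exact le_add_of_nonneg_left (Nat.cast_nonneg m)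
      rw [norm_smul, Real.norm_eq_abs, abs_of_nonneg (by linarith)]
      calc (1 - 1/(m+1):ℝ) * ‖y‖ < 1 * ‖y‖ := by nlinarith
        _ = ‖y‖ := one_mul _
        _ ≤ K := hy
    have htend : Filter.Tendsto (fun m : ℕ => ((1 - 1/(m+1):ℝ) • y))
        Filter.atTop (nhds y) := by
      have h13 : Filter.Tendsto (fun m : ℕ => (1 - 1/(m+1) : ℝ))
          Filter.atTop (nhds 1) := by
        have h14 := tendsto_one_div_add_atTop_nhds_zero_nat (𝕜 := ℝ)
        have h15 := (tendsto_const_nhds (x := (1:ℝ)) (f := Filter.atTop (α := ℕ))).sub h14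
        simpa using h15
      have h16 := h13.smul_const y
      simpa using h16
    exact hQ'closed.mem_of_tendsto htend (Filter.Eventually.of_forall hseq)
  refine ⟨hK0, ?_⟩
  rintro ζ ⟨z, hzconv, hz0, rfl⟩ x
  have hzF : z ∈ F :=
    convexHull_min (by rw [hF]; exact Submodule.subset_span) F.convex hzconv
  have hζF : ‖z‖⁻¹ • z ∈ F := F.smul_mem _ hzF
  have hζnorm : ‖‖z‖⁻¹ • z‖ = 1 := by
    rw [norm_smul, norm_inv, norm_norm, inv_mul_cancel₀ (norm_ne_zero_iff.2 hz0)]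
  have key : ∀ c : ℝ, |c| ≤ K → (c • (‖z‖⁻¹ • z)) ∈ Q := by
    intro c hc
    have hmem := hmem_le (⟨c • (‖z‖⁻¹ • z), F.smul_mem _ hζF⟩ : F) (by
      show ‖(⟨c • (‖z‖⁻¹ • z), F.smul_mem _ hζF⟩ : F)‖ ≤ K
      rw [show ‖(⟨c • (‖z‖⁻¹ • z), F.smul_mem _ hζF⟩ : F)‖ = ‖c • (‖z‖⁻¹ • z)‖ from rfl]
      rw [norm_smul, Real.norm_eq_abs, hζnorm, mul_one]
      exact hc)
    simpa [hQ', Set.mem_preimage] using hmem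
  set g : Fin (k+1) → ℝ := fun i => ⟪q i, x⟫_ℝ with hg
  have hQle : ∀ y ∈ Q, ⟪y, x⟫_ℝ ≤ Finset.univ.sup' Finset.univ_nonempty g := by
    intro y hy
    rw [hQ] at hy
    have hconvset : Convex ℝ {y : En n | ⟪y, x⟫_ℝ ≤ Finset.univ.sup' Finset.univ_nonempty g} := by
      apply convex_halfSpace_le
      exact ⟨fun a b => inner_add_left a b x, fun c y => real_inner_smul_left y x c⟩
    have hsubset : convexHull ℝ (Set.range q) ⊆
        {y : En n | ⟪y, x⟫_ℝ ≤ Finset.univ.sup' Finset.univ_nonempty g} := by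
      apply convexHull_min ?_ hconvset
      rintro _ ⟨i, rfl⟩
      exact Finset.le_sup' g (Finset.mem_univ i)
    exact hsubset hy
  have hKM : K * |⟪‖z‖⁻¹ • z, x⟫_ℝ| ≤ Finset.univ.sup' Finset.univ_nonempty g := by
    rcases abs_cases ⟪‖z‖⁻¹ • z, x⟫_ℝ with ⟨habs, hsign⟩ | ⟨habs, hsign⟩
    · have h17 := hQle _ (key K (by rw [abs_of_nonneg hK0.le]))
      rw [real_inner_smul_left] at h17
      rw [habs]; linarith
    · have h17 := hQle _ (key (-K) (by rw [abs_neg, abs_of_nonneg hK0.le]))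
      rw [real_inner_smul_left] at h17
      rw [habs]; nlinarith
  obtain ⟨i, -, hi⟩ := Finset.exists_mem_eq_sup' Finset.univ_nonempty g
  have hinf : Finset.univ.inf' Finset.univ_nonempty (fun i => ⟪p i - pbar, x⟫_ℝ)
      ≤ ⟪p i - pbar, x⟫_ℝ :=
    Finset.inf'_le _ (Finset.mem_univ i)
  have heq : ⟪p i - pbar, x⟫_ℝ = -g i := by
    rw [hg, show p i - pbar = -(q i) from by rw [hq]; simp [neg_sub], inner_neg_left]
  calc Finset.univ.inf' Finset.univ_nonempty (fun i => ⟪p i - pbar, x⟫_ℝ)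
      ≤ ⟪p i - pbar, x⟫_ℝ := hinf
    _ = -(Finset.univ.sup' Finset.univ_nonempty g) := by rw [heq, ← hi]
    _ ≤ -(K * |⟪‖z‖⁻¹ • z, x⟫_ℝ|) := neg_le_neg hKM
    _ = -K * |⟪‖z‖⁻¹ • z, x⟫_ℝ| := (neg_mul _ _).symm
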